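/- For almost every x ∈ (0,1) with continued fraction expansion x = [a_1, a_2, …], one has limsup_{n→∞} (log a_n)/(log n) = 1 (Corollary 5). -/

import Mathlib

open Filter MeasureTheory Real Topology

/-- The Gauss map `x ↦ {1/x}`. -/
noncomputable def gaussMap (x : ℝ) : ℝ := Int.fract x⁻¹

/-- `partQuot x n` is the `n`-th partial quotient `aₙ` of the regular continued fraction
expansion `x = [a₁, a₂, …]` of `x ∈ (0,1)` (meaningful for `n ≥ 1`). -/
noncomputable def partQuot (x : ℝ) (n : ℕ) : ℕ := (⌊(gaussMap^[n - 1] x)⁻¹⌋).toNat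

/-- `cfQ x n` is the denominator `qₙ` of the `n`-th continued fraction convergent
`pₙ/qₙ = [a₁, …, aₙ]` of `x`, given by `q₀ = 1`, `q₁ = a₁`, `qₙ = aₙ qₙ₋₁ + qₙ₋₂`. -/
noncomputable def cfQ (x : ℝ) : ℕ → ℤ
  | 0 => 1
  | 1 => partQuot x 1
  | (n + 2) => partQuot x (n + 2) * cfQ x (n + 1) + cfQ x n

/-- `cfP x n` is the numerator `pₙ` of the `n`-th continued fraction convergent of `x`,
given by `p₀ = 0`, `p₁ = 1`, `pₙ = aₙ pₙ₋₁ + pₙ₋₂`. -/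
noncomputable def cfP (x : ℝ) : ℕ → ℤ
  | 0 => 0
  | 1 => 1
  | (n + 2) => partQuot x (n + 2) * cfP x (n + 1) + cfP x n


def Irr01 (x : ℝ) : Prop := x ∈ Set.Ioo (0:ℝ) 1 ∧ Irrational x

lemma Irr01.pos {x : ℝ} (h : Irr01 x) : 0 < x := h.1.1
lemma Irr01.lt_one {x : ℝ} (h : Irr01 x) : x < 1 := h.1.2
lemma Irr01.irr {x : ℝ} (h : Irr01 x) : Irrational x := h.2

lemma Irr01.one_lt_inv {x : ℝ} (h : Irr01 x) : 1 < x⁻¹ :=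
  (one_lt_inv₀ h.pos).2 h.lt_one

lemma Irr01.gauss {x : ℝ} (h : Irr01 x) : Irr01 (gaussMap x) := by
  have hirr : Irrational (Int.fract x⁻¹) := (h.irr.inv).sub_intCast _
  refine ⟨⟨?_, ?_⟩, hirr⟩
  · rcases lt_or_eq_of_le (Int.fract_nonneg x⁻¹) with h' | h'
    · exact h'
    · exact absurd h'.symm (by simpa using hirr.ne_int 0)
  · exact Int.fract_lt_one _

lemma Irr01.iterate {x : ℝ} (h : Irr01 x) (n : ℕ) : Irr01 (gaussMap^[n] x) := by
  induction n with
  | zero => simpa using h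
  | succ n ih => rw [Function.iterate_succ_apply']; exact ih.gauss

lemma partQuot_one_pos {x : ℝ} (h : Irr01 x) : 1 ≤ partQuot x 1 := by
  have : (1:ℤ) ≤ ⌊x⁻¹⌋ := Int.le_floor.2 (by exact_mod_cast h.one_lt_inv.le)
  simpa [partQuot] using Int.toNat_le_toNat this

lemma inv_eq_partQuot_add_gauss {x : ℝ} (h : Irr01 x) :
    x⁻¹ = (partQuot x 1 : ℝ) + gaussMap x := by
  have h0 : (0:ℤ) ≤ ⌊x⁻¹⌋ := Int.le_floor.2 (by simpa using (le_trans zero_le_one h.one_lt_inv.le))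
  have : (partQuot x 1 : ℝ) = (⌊x⁻¹⌋ : ℝ) := by
    have := Int.toNat_of_nonneg h0
    simp only [partQuot]
    norm_num
    exact_mod_cast congrArg (fun z : ℤ => (z:ℝ)) this
  rw [this, gaussMap, Int.fract]
  ring

lemma eq_inv_partQuot_add_gauss {x : ℝ} (h : Irr01 x) :
    x = ((partQuot x 1 : ℝ) + gaussMap x)⁻¹ := by
  rw [← inv_eq_partQuot_add_gauss h, inv_inv]

lemma partQuot_succ (x : ℝ) (n : ℕ) :
    partQuot x (n + 2) = partQuot (gaussMap x) (n + 1) := by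
  simp [partQuot, Function.iterate_succ_apply]

lemma partQuot_eq_iterate (x : ℝ) (n : ℕ) :
    partQuot x (n + 1) = partQuot (gaussMap^[n] x) 1 := by
  simp [partQuot]

/-! ### Möbius maps from lists of partial quotients -/

def mob : List ℕ → (ℤ × ℤ) × (ℤ × ℤ)
  | [] => ((1, 0), (0, 1))
  | c :: l => (((mob l).2.1, (mob l).2.2),
      ((mob l).1.1 + (c:ℤ) * (mob l).2.1, (mob l).1.2 + (c:ℤ) * (mob l).2.2))

def mA (l : List ℕ) : ℤ := (mob l).1.1
def mB (l : List ℕ) : ℤ := (mob l).1.2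
def mC (l : List ℕ) : ℤ := (mob l).2.1
def mD (l : List ℕ) : ℤ := (mob l).2.2

@[simp] lemma mA_nil : mA [] = 1 := rfl
@[simp] lemma mB_nil : mB [] = 0 := rfl
@[simp] lemma mC_nil : mC [] = 0 := rfl
@[simp] lemma mD_nil : mD [] = 1 := rfl
@[simp] lemma mA_cons (c : ℕ) (l : List ℕ) : mA (c :: l) = mC l := rfl
@[simp] lemma mB_cons (c : ℕ) (l : List ℕ) : mB (c :: l) = mD l := rfl
@[simp] lemma mC_cons (c : ℕ) (l : List ℕ) : mC (c :: l) = mA l + c * mC l := rfl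
@[simp] lemma mD_cons (c : ℕ) (l : List ℕ) : mD (c :: l) = mB l + c * mD l := rfl

def Good (l : List ℕ) : Prop := ∀ c ∈ l, 1 ≤ c

lemma good_nil : Good [] := by intro c hc; simp at hc

lemma good_cons {c : ℕ} {l : List ℕ} : Good (c :: l) ↔ 1 ≤ c ∧ Good l := by
  constructor
  · intro h; exact ⟨h c (by simp), fun d hd => h d (by simp [hd])⟩
  · rintro ⟨h1, h2⟩ d hd
    rcases List.mem_cons.1 hd with rfl | hd
    · exact h1
    · exact h2 d hd

lemma mob_inv {l : List ℕ} (hl : Good l) :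
    0 ≤ mA l ∧ 0 ≤ mB l ∧ 0 ≤ mC l ∧ 1 ≤ mD l ∧ mC l ≤ mD l ∧ (l = [] ∨ mA l ≤ mB l) := by
  induction l with
  | nil => simp
  | cons c l ih =>
    obtain ⟨hc, hl'⟩ := good_cons.1 hl
    obtain ⟨hA, hB, hC, hD, hCD, hor⟩ := ih hl'
    have hc' : (1:ℤ) ≤ (c:ℤ) := by exact_mod_cast hc
    have hCD' : mA l + (c:ℤ) * mC l ≤ mB l + (c:ℤ) * mD l := by
      rcases hor with rfl | hAB
      · simp; nlinarith
      · nlinarith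
    refine ⟨by simpa using hC, by simpa using (le_trans (by norm_num) hD),
      by simp; nlinarith, by simp; nlinarith, by simpa using hCD', Or.inr (by simpa using hCD)⟩

lemma mA_nonneg {l : List ℕ} (hl : Good l) : 0 ≤ mA l := (mob_inv hl).1
lemma mB_nonneg {l : List ℕ} (hl : Good l) : 0 ≤ mB l := (mob_inv hl).2.1
lemma mC_nonneg {l : List ℕ} (hl : Good l) : 0 ≤ mC l := (mob_inv hl).2.2.1
lemma mD_pos {l : List ℕ} (hl : Good l) : 1 ≤ mD l := (mob_inv hl).2.2.2.1
lemma mC_le_mD {l : List ℕ} (hl : Good l) : mC l ≤ mD l := (mob_inv hl).2.2.2.2.1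

lemma mob_det (l : List ℕ) : mA l * mD l - mB l * mC l = (-1) ^ l.length := by
  induction l with
  | nil => simp
  | cons c l ih => simp [pow_succ]; ring_nf; ring_nf at ih; linarith [ih]

noncomputable def Gmap (l : List ℕ) (t : ℝ) : ℝ :=
  ((mA l : ℝ) * t + mB l) / ((mC l : ℝ) * t + mD l)

lemma denom_pos {l : List ℕ} (hl : Good l) {t : ℝ} (ht : 0 ≤ t) :
    0 < (mC l : ℝ) * t + mD l := by
  have h1 : (0:ℝ) ≤ (mC l : ℝ) := by exact_mod_cast mC_nonneg hl
  have h2 : (1:ℝ) ≤ (mD l : ℝ) := by exact_mod_cast mD_pos hl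
  nlinarith

lemma Gmap_nonneg {l : List ℕ} (hl : Good l) {t : ℝ} (ht : 0 ≤ t) : 0 ≤ Gmap l t := by
  have h1 : (0:ℝ) ≤ (mA l : ℝ) := by exact_mod_cast mA_nonneg hl
  have h2 : (0:ℝ) ≤ (mB l : ℝ) := by exact_mod_cast mB_nonneg hl
  exact div_nonneg (by nlinarith) (denom_pos hl ht).le

lemma Gmap_nil (t : ℝ) : Gmap [] t = t := by simp [Gmap]

lemma Gmap_cons {l : List ℕ} (hl : Good l) (c : ℕ) {t : ℝ} (ht : 0 ≤ t) :
    Gmap (c :: l) t = (((c:ℝ)) + Gmap l t)⁻¹ := by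
  have hd := denom_pos hl ht
  have hnum : (0:ℝ) < (c:ℝ) + Gmap l t ∨ True := Or.inr trivial
  have key : ((c:ℝ)) + Gmap l t =
      ((mC (c::l) : ℝ) * t + mD (c::l)) / ((mC l : ℝ) * t + mD l) := by
    rw [Gmap, eq_div_iff hd.ne']
    simp only [mC_cons, mD_cons]
    push_cast
    rw [add_mul, div_mul_cancel₀ _ hd.ne']
    ring
  rw [key, inv_div, Gmap]
  push_cast
  norm_num

lemma Gmap_sub {l : List ℕ} (hl : Good l) {u v : ℝ} (hu : 0 ≤ u) (hv : 0 ≤ v) :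
    Gmap l v - Gmap l u =
      ((-1:ℝ)) ^ l.length * (v - u) / (((mC l : ℝ) * u + mD l) * ((mC l : ℝ) * v + mD l)) := by
  have hdu := denom_pos hl hu
  have hdv := denom_pos hl hv
  have hdet : (mA l : ℝ) * mD l - (mB l) * (mC l) = (-1:ℝ) ^ l.length := by
    exact_mod_cast congrArg (fun z : ℤ => (z:ℝ)) (mob_det l)
  rw [Gmap, Gmap, div_sub_div _ _ hdv.ne' hdu.ne', div_eq_div_iff (by positivity) (by positivity)]
  linear_combination ((v - u) * (((mC l:ℝ) * u + mD l) * ((mC l:ℝ) * v + mD l))) * hdet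

/-! ### Correspondence between cylinders and Möbius images -/

noncomputable def pqList (x : ℝ) (n : ℕ) : List ℕ :=
  (List.range n).map fun i => partQuot x (i + 1)

@[simp] lemma pqList_zero (x : ℝ) : pqList x 0 = [] := by simp [pqList]

lemma pqList_succ (x : ℝ) (n : ℕ) :
    pqList x (n + 1) = partQuot x 1 :: pqList (gaussMap x) n := by
  rw [pqList, List.range_succ_eq_map, List.map_cons, List.map_map]
  congr 1

lemma pqList_length (x : ℝ) (n : ℕ) : (pqList x n).length = n := by simp [pqList]

lemma pqList_good {x : ℝ} (h : Irr01 x) (n : ℕ) : Good (pqList x n) := by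
  intro c hc
  simp only [pqList, List.mem_map, List.mem_range] at hc
  obtain ⟨i, _, rfl⟩ := hc
  rw [partQuot_eq_iterate]
  exact partQuot_one_pos (h.iterate i)

lemma pqList_get {x : ℝ} (n i : ℕ) (hi : i < n) :
    (pqList x n).getD i 0 = partQuot x (i + 1) := by
  simp [pqList, List.getD_eq_getElem?_getD, hi]

lemma forward {x : ℝ} (h : Irr01 x) (n : ℕ) :
    Gmap (pqList x n) (gaussMap^[n] x) = x := by
  induction n generalizing x with
  | zero => simp [Gmap_nil]
  | succ n ih =>
    have hTx : Irr01 (gaussMap x) := h.gauss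
    rw [pqList_succ, Function.iterate_succ_apply,
      Gmap_cons (pqList_good hTx n) _ (hTx.iterate n).pos.le, ih hTx,
      ← eq_inv_partQuot_add_gauss h]

lemma backward {l : List ℕ} (hl : Good l) {y : ℝ} (hy : Irr01 y) :
    Irr01 (Gmap l y) ∧ gaussMap^[l.length] (Gmap l y) = y ∧ pqList (Gmap l y) l.length = l := by
  induction l with
  | nil => simpa [Gmap_nil] using hy
  | cons c l ih =>
    obtain ⟨hc, hl'⟩ := good_cons.1 hl
    obtain ⟨hx', hiter, hpq⟩ := ih hl'
    set x' := Gmap l y with hx'def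
    have hG : Gmap (c :: l) y = ((c:ℝ) + x')⁻¹ := Gmap_cons hl' c hy.pos.le
    have hcx : (1:ℝ) < (c:ℝ) + x' := by
      have : (1:ℝ) ≤ (c:ℝ) := by exact_mod_cast hc
      nlinarith [hx'.pos]
    have hx0 : (0:ℝ) < (c:ℝ) + x' := lt_trans one_pos hcx
    have hirr : Irrational (((c:ℝ) + x')⁻¹) := by
      have := (hx'.irr.intCast_add (c:ℤ)).inv
      push_cast at this
      exact this
    have hmem : Irr01 (((c:ℝ) + x')⁻¹) :=
      ⟨⟨by positivity, by rw [inv_lt_one_iff₀]; right; exact hcx⟩, hirr⟩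
    have hfloor : ⌊(c:ℝ) + x'⌋ = (c:ℤ) := by
      have h0 : ⌊x'⌋ = 0 := Int.floor_eq_zero_iff.2 ⟨hx'.pos.le, hx'.lt_one⟩
      have : ((c:ℝ) + x') = ((c:ℤ):ℝ) + x' := by push_cast; ring
      rw [this, Int.floor_intCast_add, h0, add_zero]
    have hgauss : gaussMap (((c:ℝ) + x')⁻¹) = x' := by
      rw [gaussMap, inv_inv]
      have : ((c:ℝ) + x') = ((c:ℤ):ℝ) + x' := by push_cast; ring
      rw [this, Int.fract_intCast_add, Int.fract_eq_self.2 ⟨hx'.pos.le, hx'.lt_one⟩]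
    have hpq1 : partQuot (((c:ℝ) + x')⁻¹) 1 = c := by
      show (⌊(gaussMap^[0] (((c:ℝ) + x')⁻¹))⁻¹⌋).toNat = c
      simp only [Function.iterate_zero, id_eq, inv_inv]
      rw [hfloor]
      simp
    refine ⟨hG ▸ hmem, ?_, ?_⟩
    · rw [hG]
      simp only [List.length_cons]
      rw [Function.iterate_succ_apply, hgauss, hiter]
    · rw [hG]
      simp only [List.length_cons]
      rw [pqList_succ, hgauss, hpq1, hpq]

/-! ### Images of intervals and their measures -/

lemma Gmap_not_irrational {l : List ℕ} (hl : Good l) {y : ℝ} (hy : 0 ≤ y)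
    (h : ¬ Irrational y) : ¬ Irrational (Gmap l y) := by
  rw [Irrational, not_not] at h ⊢
  obtain ⟨r, rfl⟩ := h
  refine ⟨((mA l : ℚ) * r + mB l) / ((mC l : ℚ) * r + mD l), ?_⟩
  push_cast
  rfl

lemma Gmap_irrational {l : List ℕ} (hl : Good l) {y : ℝ} (hy : 0 ≤ y)
    (h : Irrational y) : Irrational (Gmap l y) := by
  by_contra hcon
  rw [Irrational, not_not] at hcon
  obtain ⟨q, hq⟩ := hcon
  have hd := denom_pos hl hy
  have heq : (mA l : ℝ) * y + mB l = (q : ℝ) * ((mC l : ℝ) * y + mD l) := by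
    have := hq
    rw [Gmap, eq_comm, div_eq_iff hd.ne'] at this
    linarith [this]
  by_cases hAC : (mA l : ℝ) - (q : ℝ) * mC l = 0
  · have hBD : (mB l : ℝ) = (q : ℝ) * mD l := by nlinarith [heq, hd]
    have hdet : ((mA l : ℝ) * mD l - mB l * mC l) = ((-1:ℝ)) ^ l.length := by
      exact_mod_cast congrArg (fun z : ℤ => (z:ℝ)) (mob_det l)
    have : ((-1:ℝ)) ^ l.length = 0 := by
      rw [← hdet]
      linear_combination (mD l : ℝ) * hAC - (mC l : ℝ) * hBD
    exact absurd this (by positivity)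
  · apply h
    refine ⟨((q : ℚ) * mD l - mB l) / (mA l - (q:ℚ) * mC l), ?_⟩
    push_cast
    rw [div_eq_iff hAC]
    nlinarith [heq]

lemma Gmap_mem_uIoo {l : List ℕ} (hl : Good l) {u v y : ℝ} (hu : 0 ≤ u)
    (h1 : u < y) (h2 : y < v) : Gmap l y ∈ Set.uIoo (Gmap l u) (Gmap l v) := by
  have hy : 0 ≤ y := le_trans hu h1.le
  have hv : 0 ≤ v := le_trans hy h2.le
  have e1 := Gmap_sub hl hu hy
  have e2 := Gmap_sub hl hy hv
  have p1 : 0 < ((mC l : ℝ) * u + mD l) * ((mC l : ℝ) * y + mD l) :=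
    mul_pos (denom_pos hl hu) (denom_pos hl hy)
  have p2 : 0 < ((mC l : ℝ) * y + mD l) * ((mC l : ℝ) * v + mD l) :=
    mul_pos (denom_pos hl hy) (denom_pos hl hv)
  rcases Nat.even_or_odd l.length with he | ho
  · have hs : ((-1:ℝ)) ^ l.length = 1 := he.neg_one_pow
    rw [hs] at e1 e2
    have d1 : 0 < Gmap l y - Gmap l u := e1 ▸ div_pos (by nlinarith) p1
    have d2 : 0 < Gmap l v - Gmap l y := e2 ▸ div_pos (by nlinarith) p2
    exact Set.mem_uIoo_of_lt (by linarith) (by linarith)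
  · have hs : ((-1:ℝ)) ^ l.length = -1 := ho.neg_one_pow
    rw [hs] at e1 e2
    have d1 : Gmap l y - Gmap l u < 0 := e1 ▸ div_neg_of_neg_of_pos (by nlinarith) p1
    have d2 : Gmap l v - Gmap l y < 0 := e2 ▸ div_neg_of_neg_of_pos (by nlinarith) p2
    exact Set.mem_uIoo_of_gt (by linarith) (by linarith)

lemma Gmap_continuousOn {l : List ℕ} (hl : Good l) {v : ℝ} :
    ContinuousOn (Gmap l) (Set.Icc 0 v) := by
  apply ContinuousOn.div
  · fun_prop
  · fun_prop
  · intro t ht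
    exact (denom_pos hl ht.1).ne'

lemma Gmap_image {l : List ℕ} (hl : Good l) {v : ℝ} (hv0 : 0 < v) :
    Gmap l '' (Set.Ioo 0 v ∩ {x | Irrational x}) =
      Set.uIoo (Gmap l 0) (Gmap l v) ∩ {x | Irrational x} := by
  apply Set.Subset.antisymm
  · rintro x ⟨y, ⟨⟨hy0, hyv⟩, hyirr⟩, rfl⟩
    exact ⟨Gmap_mem_uIoo hl (le_refl 0) hy0 hyv, Gmap_irrational hl hy0.le hyirr⟩
  · rintro x ⟨hx, hxirr⟩
    have hy : x ∈ Gmap l '' (Set.Ioo 0 v) := by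
      rcases le_total (Gmap l 0) (Gmap l v) with hle | hle
      · rw [Set.uIoo_of_le hle] at hx
        exact intermediate_value_Ioo hv0.le (Gmap_continuousOn hl) hx
      · rw [Set.uIoo_of_ge hle] at hx
        exact intermediate_value_Ioo' hv0.le (Gmap_continuousOn hl) hx
    obtain ⟨y, ⟨hy0, hyv⟩, rfl⟩ := hy
    refine ⟨y, ⟨⟨hy0, hyv⟩, ?_⟩, rfl⟩
    by_contra hcon
    exact Gmap_not_irrational hl hy0.le hcon hxirr

lemma volume_uIoo' (a b : ℝ) : volume (Set.uIoo a b) = ENNReal.ofReal |b - a| := by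
  rw [Set.uIoo, Real.volume_Ioo]
  congr 1
  exact max_sub_min_eq_abs a b

lemma volume_irr_compl : volume {x : ℝ | Irrational x}ᶜ = 0 := by
  have : {x : ℝ | Irrational x}ᶜ = Set.range ((↑) : ℚ → ℝ) := by
    ext x
    simp [Irrational]
  rw [this]
  exact (Set.countable_range _).measure_zero _

lemma volume_inter_irr (s : Set ℝ) : volume (s ∩ {x | Irrational x}) = volume s :=
  measure_inter_conull volume_irr_compl

lemma volume_Gmap_image {l : List ℕ} (hl : Good l) {v : ℝ} (hv0 : 0 < v) :
    volume (Gmap l '' (Set.Ioo 0 v ∩ {x | Irrational x})) =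
      ENNReal.ofReal (v / ((mD l : ℝ) * ((mC l : ℝ) * v + mD l))) := by
  rw [Gmap_image hl hv0, volume_inter_irr, volume_uIoo']
  congr 1
  have e := Gmap_sub hl (le_refl (0:ℝ)) hv0.le
  rw [e]
  have h1 : (0:ℝ) < (mC l : ℝ) * 0 + mD l := denom_pos hl (le_refl 0)
  have h2 : (0:ℝ) < (mC l : ℝ) * v + mD l := denom_pos hl hv0.le
  rw [abs_div, abs_mul, abs_pow, abs_neg, abs_one, one_pow, one_mul,
    abs_of_pos (by nlinarith : (0:ℝ) < ((mC l : ℝ) * 0 + mD l) * ((mC l : ℝ) * v + mD l)),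
    abs_of_pos (by linarith : (0:ℝ) < v - 0)]
  rw [mul_zero, zero_add] at *
  ring_nf

/-! ### Cylinder sets -/

noncomputable def cylSet (l : List ℕ) : Set ℝ :=
  Gmap l '' (Set.Ioo 0 1 ∩ {x | Irrational x})

noncomputable def cylPart (l : List ℕ) (k : ℕ) : Set ℝ :=
  Gmap l '' (Set.Ioo 0 (1 / (k:ℝ)) ∩ {x | Irrational x})

lemma Irr01_iff {x : ℝ} : Irr01 x ↔ x ∈ Set.Ioo (0:ℝ) 1 ∩ {x | Irrational x} :=
  Iff.rfl

lemma mem_cylSet_iff {l : List ℕ} (hl : Good l) {x : ℝ} :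
    x ∈ cylSet l ↔ Irr01 x ∧ pqList x l.length = l := by
  constructor
  · rintro ⟨y, hy, rfl⟩
    have hy' : Irr01 y := ⟨hy.1, hy.2⟩
    obtain ⟨h1, _, h3⟩ := backward hl hy'
    exact ⟨h1, h3⟩
  · rintro ⟨hx, hpq⟩
    refine ⟨gaussMap^[l.length] x, Irr01_iff.1 (hx.iterate _), ?_⟩
    conv_rhs => rw [← forward hx l.length]
    rw [hpq]

lemma mem_cylPart_iff {l : List ℕ} (hl : Good l) {k : ℕ} (hk : 1 ≤ k) {x : ℝ} :
    x ∈ cylPart l k ↔ x ∈ cylSet l ∧ k ≤ partQuot x (l.length + 1) := by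
  have hk' : (0:ℝ) < (k:ℝ) := by exact_mod_cast hk
  constructor
  · rintro ⟨y, ⟨⟨hy0, hyk⟩, hyirr⟩, rfl⟩
    have hy1 : y < 1 := lt_of_lt_of_le hyk (by
      rw [div_le_one hk']
      exact_mod_cast hk)
    have hy' : Irr01 y := ⟨⟨hy0, hy1⟩, hyirr⟩
    obtain ⟨h1, h2, h3⟩ := backward hl hy'
    constructor
    · exact ⟨y, ⟨⟨hy0, hy1⟩, hyirr⟩, rfl⟩
    · rw [partQuot_eq_iterate, h2]
      show k ≤ (⌊(gaussMap^[0] y)⁻¹⌋).toNat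
      simp only [Function.iterate_zero, id_eq]
      have hyinv : (k:ℝ) ≤ y⁻¹ := by
        rw [← one_div, le_div_iff₀ hy0]
        rw [lt_div_iff₀ hk'] at hyk
        nlinarith
      have hfl : (k:ℤ) ≤ ⌊y⁻¹⌋ := Int.le_floor.2 (by exact_mod_cast hyinv)
      rw [Int.le_toNat (le_trans (by exact_mod_cast Nat.zero_le k) hfl)]
      exact hfl
  · rintro ⟨hx, hpk⟩
    obtain ⟨y, hy, rfl⟩ := hx
    have hy' : Irr01 y := ⟨hy.1, hy.2⟩
    obtain ⟨h1, h2, h3⟩ := backward hl hy'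
    refine ⟨y, ⟨⟨hy.1.1, ?_⟩, hy.2⟩, rfl⟩
    rw [partQuot_eq_iterate, h2] at hpk
    have hfl : (k:ℤ) ≤ ⌊y⁻¹⌋ := by
      have h0 : (0:ℤ) ≤ ⌊y⁻¹⌋ := Int.le_floor.2 (by
        simp only [Int.cast_zero]
        exact inv_nonneg.2 hy'.pos.le)
      rw [← Int.toNat_of_nonneg h0]
      show (k:ℤ) ≤ ((⌊(gaussMap^[0] y)⁻¹⌋).toNat : ℤ)
      exact_mod_cast hpk
    have hyk : (k:ℝ) ≤ y⁻¹ := le_trans (by exact_mod_cast hfl) (Int.floor_le _)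
    have hle : y ≤ 1 / k := by
      rw [le_div_iff₀ hk']
      rw [← one_div, le_div_iff₀ hy'.pos] at hyk
      nlinarith
    rcases lt_or_eq_of_le hle with h | h
    · exact h
    · exfalso
      apply Rat.not_irrational (1 / (k:ℚ))
      have : ((1 / (k:ℚ) : ℚ) : ℝ) = y := by push_cast; rw [h]
      rw [this]
      exact hy'.irr

lemma volume_cylSet {l : List ℕ} (hl : Good l) :
    volume (cylSet l) = ENNReal.ofReal (1 / ((mD l : ℝ) * (mC l + mD l))) := by
  rw [cylSet, volume_Gmap_image hl one_pos]
  norm_num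

lemma measurableSet_uIoo_irr (a b : ℝ) :
    MeasurableSet (Set.uIoo a b ∩ {x | Irrational x}) := by
  refine MeasurableSet.inter ?_ ?_
  · rw [Set.uIoo]; exact measurableSet_Ioo
  · have : {x : ℝ | Irrational x} = (Set.range ((↑) : ℚ → ℝ))ᶜ := by ext x; simp [Irrational]
    rw [this]
    exact (Set.Countable.measurableSet (Set.countable_range _)).compl

lemma volume_cylPart {l : List ℕ} (hl : Good l) {k : ℕ} (hk : 1 ≤ k) :
    volume (cylPart l k) = ENNReal.ofReal (1 / ((mD l : ℝ) * (mC l + k * mD l))) := by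
  have hk' : (0:ℝ) < (k:ℝ) := by exact_mod_cast hk
  have h1 : (1:ℝ) ≤ (mD l : ℝ) := by exact_mod_cast mD_pos hl
  have h2 : (0:ℝ) ≤ (mC l : ℝ) := by exact_mod_cast mC_nonneg hl
  rw [cylPart, volume_Gmap_image hl (by positivity)]
  congr 1
  have hCk : (0:ℝ) ≤ (mC l : ℝ) * (1/k) := by positivity
  have hkD : (0:ℝ) < (k:ℝ) * mD l := mul_pos hk' (by linarith)
  have hd1 : (0:ℝ) < (mD l : ℝ) * ((mC l : ℝ) * (1/k) + mD l) :=
    mul_pos (by linarith) (by linarith)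
  have hd2 : (0:ℝ) < (mD l : ℝ) * ((mC l : ℝ) + k * mD l) :=
    mul_pos (by linarith) (by linarith)
  rw [div_eq_div_iff hd1.ne' hd2.ne']
  field_simp
  try ring
  try tauto

lemma measurableSet_cylSet' {l : List ℕ} (hl : Good l) : MeasurableSet (cylSet l) := by
  rw [cylSet, Gmap_image hl one_pos]
  exact measurableSet_uIoo_irr _ _

lemma measurableSet_cylPart' {l : List ℕ} (hl : Good l) {k : ℕ} (hk : 1 ≤ k) :
    MeasurableSet (cylPart l k) := by
  have hk' : (0:ℝ) < (k:ℝ) := by exact_mod_cast hk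
  rw [cylPart, Gmap_image hl (by positivity)]
  exact measurableSet_uIoo_irr _ _

lemma cylPart_subset {l : List ℕ} (hl : Good l) {k : ℕ} (hk : 1 ≤ k) :
    cylPart l k ⊆ cylSet l := fun x hx => ((mem_cylPart_iff hl hk).1 hx).1

lemma volume_cylPart_le {l : List ℕ} (hl : Good l) {k : ℕ} (hk : 1 ≤ k) :
    volume (cylPart l k) ≤ ENNReal.ofReal (2 / k) * volume (cylSet l) := by
  rw [volume_cylPart hl hk, volume_cylSet hl, ← ENNReal.ofReal_mul (by positivity)]
  apply ENNReal.ofReal_le_ofReal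
  have h1 : (1:ℝ) ≤ (mD l : ℝ) := by exact_mod_cast mD_pos hl
  have h2 : (0:ℝ) ≤ (mC l : ℝ) := by exact_mod_cast mC_nonneg hl
  have h3 : (mC l : ℝ) ≤ (mD l : ℝ) := by exact_mod_cast mC_le_mD hl
  have hk' : (1:ℝ) ≤ (k:ℝ) := by exact_mod_cast hk
  have hkD : (0:ℝ) < (k:ℝ) * mD l := mul_pos (by linarith) (by linarith)
  have hd2 : (0:ℝ) < (mD l : ℝ) * ((mC l : ℝ) + k * mD l) :=
    mul_pos (by linarith) (by linarith)
  have hd3 : (0:ℝ) < (mD l : ℝ) * ((mC l : ℝ) + mD l) :=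
    mul_pos (by linarith) (by linarith)
  rw [div_mul_div_comm, mul_one, div_le_div_iff₀ hd2 (by positivity)]
  nlinarith

lemma volume_cylPart_ge {l : List ℕ} (hl : Good l) {k : ℕ} (hk : 1 ≤ k) :
    ENNReal.ofReal (1 / k) * volume (cylSet l) ≤ volume (cylPart l k) := by
  rw [volume_cylPart hl hk, volume_cylSet hl, ← ENNReal.ofReal_mul (by positivity)]
  apply ENNReal.ofReal_le_ofReal
  have h1 : (1:ℝ) ≤ (mD l : ℝ) := by exact_mod_cast mD_pos hl
  have h2 : (0:ℝ) ≤ (mC l : ℝ) := by exact_mod_cast mC_nonneg hl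
  have h3 : (mC l : ℝ) ≤ (mD l : ℝ) := by exact_mod_cast mC_le_mD hl
  have hk' : (1:ℝ) ≤ (k:ℝ) := by exact_mod_cast hk
  have hkD : (0:ℝ) < (k:ℝ) * mD l := mul_pos (by linarith) (by linarith)
  have hd2 : (0:ℝ) < (mD l : ℝ) * ((mC l : ℝ) + k * mD l) :=
    mul_pos (by linarith) (by linarith)
  have hd3 : (0:ℝ) < (mD l : ℝ) * ((mC l : ℝ) + mD l) :=
    mul_pos (by linarith) (by linarith)
  rw [div_mul_div_comm, mul_one, div_le_div_iff₀ (by positivity) hd2]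
  nlinarith [mul_nonneg (mul_nonneg (show (0:ℝ) ≤ (mD l:ℝ) by linarith) h2)
    (show (0:ℝ) ≤ (k:ℝ) - 1 by linarith)]

/-- The complement estimate. -/
lemma volume_cylSet_diff_cylPart {l : List ℕ} (hl : Good l) {k : ℕ} (hk : 1 ≤ k) :
    volume (cylSet l \ cylPart l k) ≤ ENNReal.ofReal (1 - 1 / k) * volume (cylSet l) := by
  have hfin : volume (cylPart l k) ≠ ⊤ := by
    rw [volume_cylPart hl hk]; exact ENNReal.ofReal_ne_top
  have hfin2 : volume (cylSet l) ≠ ⊤ := by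
    rw [volume_cylSet hl]; exact ENNReal.ofReal_ne_top
  rw [measure_diff (cylPart_subset hl hk) (measurableSet_cylPart' hl hk).nullMeasurableSet hfin]
  have hk' : (0:ℝ) < (k:ℝ) := by exact_mod_cast hk
  have key := volume_cylPart_ge hl hk
  have h1 : ENNReal.ofReal (1 - 1/k) * volume (cylSet l) + ENNReal.ofReal (1/k) * volume (cylSet l)
      = volume (cylSet l) := by
    rw [← add_mul, ← ENNReal.ofReal_add (by
        have h : (1:ℝ) ≤ (k:ℝ) := by exact_mod_cast hk
        have h' : (1:ℝ)/k ≤ 1 := by rw [div_le_one hk']; exact h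
        linarith) (by positivity)]
    norm_num
  rw [tsub_le_iff_right]
  calc volume (cylSet l)
      = ENNReal.ofReal (1 - 1/k) * volume (cylSet l)
        + ENNReal.ofReal (1/k) * volume (cylSet l) := h1.symm
    _ ≤ ENNReal.ofReal (1 - 1/k) * volume (cylSet l) + volume (cylPart l k) := by
        exact add_le_add_right key _

/-! ### Global measure estimates -/

def cylL (n : ℕ) : Set (List ℕ) := {l | l.length = n ∧ Good l}

lemma GL_countable (n : ℕ) : (cylL n).Countable := Set.to_countable _

lemma cylSet_subset_Ioo {l : List ℕ} (hl : Good l) : cylSet l ⊆ Set.Ioo (0:ℝ) 1 :=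
  fun x hx => ((mem_cylSet_iff hl).1 hx).1.1

lemma GL_pairwiseDisjoint (n : ℕ) : (cylL n).PairwiseDisjoint cylSet := by
  intro l hl l' hl' hne
  rw [Function.onFun, Set.disjoint_left]
  intro x hx hx'
  apply hne
  have h1 := ((mem_cylSet_iff hl.2).1 hx).2
  have h2 := ((mem_cylSet_iff hl'.2).1 hx').2
  rw [hl.1] at h1
  rw [hl'.1] at h2
  rw [← h1, ← h2]

lemma mem_cylSet_pqList {x : ℝ} (hx : Irr01 x) (n : ℕ) : x ∈ cylSet (pqList x n) := by
  rw [mem_cylSet_iff (pqList_good hx n)]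
  exact ⟨hx, by rw [pqList_length]⟩

/-- Main estimate 1: the measure of `{aₙ₊₁ ≥ k}` is at most `2/k`. -/
lemma volume_partQuot_ge (n k : ℕ) (hk : 1 ≤ k) :
    volume {x | Irr01 x ∧ k ≤ partQuot x (n + 1)} ≤ ENNReal.ofReal (2 / k) := by
  have hset : {x | Irr01 x ∧ k ≤ partQuot x (n + 1)} = ⋃ l ∈ cylL n, cylPart l k := by
    ext x
    simp only [Set.mem_setOf_eq, Set.mem_iUnion]
    constructor
    · rintro ⟨hx, hpk⟩
      refine ⟨pqList x n, ⟨pqList_length x n, pqList_good hx n⟩, ?_⟩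
      rw [mem_cylPart_iff (pqList_good hx n) hk, pqList_length]
      exact ⟨mem_cylSet_pqList hx n, hpk⟩
    · rintro ⟨l, hl, hx⟩
      rw [mem_cylPart_iff hl.2 hk, hl.1] at hx
      exact ⟨((mem_cylSet_iff hl.2).1 hx.1).1, hx.2⟩
  rw [hset]
  calc volume (⋃ l ∈ cylL n, cylPart l k)
      ≤ ∑' l : cylL n, volume (cylPart l k) := measure_biUnion_le _ (GL_countable n) _
    _ ≤ ∑' l : cylL n, ENNReal.ofReal (2 / k) * volume (cylSet (l : List ℕ)) :=
        ENNReal.tsum_le_tsum fun l => volume_cylPart_le l.2.2 hk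
    _ = ENNReal.ofReal (2 / k) * ∑' l : cylL n, volume (cylSet (l : List ℕ)) :=
        ENNReal.tsum_mul_left
    _ = ENNReal.ofReal (2 / k) * volume (⋃ l ∈ cylL n, cylSet l) := by
        rw [measure_biUnion (GL_countable n) (GL_pairwiseDisjoint n)
          (fun l hl => measurableSet_cylSet' hl.2)]
    _ ≤ ENNReal.ofReal (2 / k) * volume (Set.Ioo (0:ℝ) 1) := by
        apply mul_le_mul_right
        apply measure_mono
        exact Set.iUnion₂_subset fun l hl => cylSet_subset_Ioo hl.2
    _ ≤ ENNReal.ofReal (2 / k) := by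
        rw [Real.volume_Ioo]
        norm_num

/-! ### Main estimate 2: eventually all `aₙ < n` has measure zero -/

def BadSet (N M : ℕ) : Set ℝ :=
  {x | Irr01 x ∧ ∀ n, N ≤ n → n ≤ M → partQuot x n < n}

def AD (N M : ℕ) : Set (List ℕ) :=
  {l | l.length = M ∧ Good l ∧ ∀ n, N ≤ n → n ≤ M → l.getD (n - 1) 0 < n}

lemma partQuot_eq_getD {x : ℝ} (hx : Irr01 x) {M n : ℕ} (h1 : 1 ≤ n) (h2 : n ≤ M) :
    (pqList x M).getD (n - 1) 0 = partQuot x n := by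
  rw [pqList_get M (n-1) (by omega)]
  congr 1
  omega

lemma badSet_subset_biUnion (N M : ℕ) (hN : 1 ≤ N) : BadSet N M ⊆ ⋃ l ∈ AD N M, cylSet l := by
  intro x ⟨hx, hall⟩
  refine Set.mem_biUnion (show pqList x M ∈ AD N M from ?_) (mem_cylSet_pqList hx M)
  refine ⟨pqList_length x M, pqList_good hx M, fun n hn1 hn2 => ?_⟩
  rw [partQuot_eq_getD hx (by omega) hn2]
  exact hall n hn1 hn2

lemma biUnion_subset_badSet (N M : ℕ) (hN : 1 ≤ N) :
    (⋃ l ∈ AD N M, cylSet l) ⊆ BadSet N M := by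
  intro x hx
  obtain ⟨l, hl, hxl⟩ := Set.mem_iUnion₂.1 hx
  obtain ⟨hlen, hgood, hlt⟩ := hl
  obtain ⟨hx01, hpq⟩ := (mem_cylSet_iff hgood).1 hxl
  rw [hlen] at hpq
  refine ⟨hx01, fun n hn1 hn2 => ?_⟩
  have := hlt n hn1 hn2
  rwa [← hpq, partQuot_eq_getD hx01 (by omega) hn2] at this

lemma AD_countable (N M : ℕ) : (AD N M).Countable := Set.to_countable _

lemma AD_pairwiseDisjoint (N M : ℕ) : (AD N M).PairwiseDisjoint cylSet := by
  intro l hl l' hl' hne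
  exact GL_pairwiseDisjoint M ⟨hl.1, hl.2.1⟩ ⟨hl'.1, hl'.2.1⟩ hne

lemma badSet_succ_subset (N M : ℕ) (hN : 1 ≤ N) (hNM : N ≤ M + 1) :
    BadSet N (M + 1) ⊆ ⋃ l ∈ AD N M, (cylSet l \ cylPart l (M + 1)) := by
  intro x ⟨hx, hall⟩
  have hmem : pqList x M ∈ AD N M := by
    refine ⟨pqList_length x M, pqList_good hx M, fun n hn1 hn2 => ?_⟩
    rw [partQuot_eq_getD hx (by omega) hn2]
    exact hall n hn1 (by omega)
  refine Set.mem_biUnion hmem ⟨mem_cylSet_pqList hx M, fun hcon => ?_⟩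
  rw [mem_cylPart_iff (pqList_good hx M) (by omega) ] at hcon
  rw [pqList_length] at hcon
  have := hall (M + 1) hNM (le_refl _)
  omega

lemma volume_badSet (N : ℕ) (hN : 1 ≤ N) :
    ∀ M, N ≤ M → volume (BadSet N M) ≤ ENNReal.ofReal ((N:ℝ) / M) := by
  intro M
  induction M with
  | zero => intro h; omega
  | succ M ih =>
    intro hNM
    rcases Nat.lt_or_ge M N with hMN | hMN
    · -- base case: M + 1 = N
      have : (N:ℝ) / (M+1 : ℕ) = 1 := by
        have hNe : N = M + 1 := by omega
        rw [hNe]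
        push_cast
        rw [div_self]
        positivity
    -- bound by the interval (0,1)
      rw [this]
      calc volume (BadSet N (M+1)) ≤ volume (Set.Ioo (0:ℝ) 1) := by
            apply measure_mono
            intro x hx
            exact hx.1.1
        _ ≤ ENNReal.ofReal 1 := by rw [Real.volume_Ioo]; norm_num
    · -- inductive step
      have hM1 : (1:ℕ) ≤ M + 1 := by omega
      calc volume (BadSet N (M+1))
          ≤ volume (⋃ l ∈ AD N M, (cylSet l \ cylPart l (M+1))) :=
            measure_mono (badSet_succ_subset N M hN (by omega))
        _ ≤ ∑' l : AD N M, volume (cylSet (l:List ℕ) \ cylPart (l:List ℕ) (M+1)) :=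
            measure_biUnion_le _ (AD_countable N M) _
        _ ≤ ∑' l : AD N M, ENNReal.ofReal (1 - 1/(M+1:ℕ)) * volume (cylSet (l:List ℕ)) :=
            ENNReal.tsum_le_tsum fun l => volume_cylSet_diff_cylPart l.2.2.1 hM1
        _ = ENNReal.ofReal (1 - 1/(M+1:ℕ)) * ∑' l : AD N M, volume (cylSet (l:List ℕ)) :=
            ENNReal.tsum_mul_left
        _ = ENNReal.ofReal (1 - 1/(M+1:ℕ)) * volume (⋃ l ∈ AD N M, cylSet l) := by
            rw [measure_biUnion (AD_countable N M) (AD_pairwiseDisjoint N M)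
              (fun l hl => measurableSet_cylSet' hl.2.1)]
        _ ≤ ENNReal.ofReal (1 - 1/(M+1:ℕ)) * ENNReal.ofReal ((N:ℝ) / M) := by
            apply mul_le_mul_right
            exact le_trans (measure_mono (biUnion_subset_badSet N M hN)) (ih hMN)
        _ ≤ ENNReal.ofReal ((N:ℝ) / (M+1:ℕ)) := by
            rw [← ENNReal.ofReal_mul (by
              have h1 : (1:ℝ) ≤ ((M:ℝ)+1) := by exact_mod_cast Nat.one_le_iff_ne_zero.2 (by omega)
              have : (1:ℝ)/((M:ℕ)+1:ℕ) ≤ 1 := by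
                rw [div_le_one (by positivity)]
                push_cast
                linarith
              push_cast at *
              linarith)]
            apply ENNReal.ofReal_le_ofReal
            have hM0 : (0:ℝ) < (M:ℝ) := by
              have h1M : 1 ≤ M := by omega
              exact_mod_cast Nat.lt_of_lt_of_le Nat.zero_lt_one h1M
            have hM10 : (0:ℝ) < (M:ℝ) + 1 := by linarith
            push_cast
            rw [show (1 - 1/((M:ℝ)+1)) * ((N:ℝ)/(M:ℝ)) = (N:ℝ)/((M:ℝ)+1) * ((1:ℝ)) by
              field_simp
              ring]
            simp

/-! ### The null sets -/

def badTail (N : ℕ) : Set ℝ := {x | Irr01 x ∧ ∀ n, N ≤ n → partQuot x n < n}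

lemma volume_badTail (N : ℕ) (hN : 1 ≤ N) : volume (badTail N) = 0 := by
  refine le_antisymm ?_ zero_le
  have hlim : Tendsto (fun M : ℕ => ENNReal.ofReal ((N:ℝ) / M)) atTop (𝓝 0) := by
    have h := ENNReal.tendsto_ofReal (tendsto_const_div_atTop_nhds_zero_nat (N:ℝ))
    simpa using h
  refine ge_of_tendsto hlim ?_
  rw [eventually_atTop]
  refine ⟨N, fun M hM => ?_⟩
  refine le_trans (measure_mono ?_) (volume_badSet N hN M hM)
  intro x ⟨hx, hall⟩
  exact ⟨hx, fun n hn _ => hall n hn⟩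

noncomputable def kceil (m n : ℕ) : ℕ := ⌈(n:ℝ) ^ ((1:ℝ) + 1/(m+1))⌉₊

def ESet (m n : ℕ) : Set ℝ := {x | Irr01 x ∧ 1 ≤ n ∧ kceil m n ≤ partQuot x n}

lemma kceil_pos (m : ℕ) {n : ℕ} (hn : 1 ≤ n) : 1 ≤ kceil m n := by
  rw [kceil, Nat.one_le_iff_ne_zero, ← Nat.pos_iff_ne_zero, Nat.lt_ceil]
  push_cast
  have hn' : (1:ℝ) ≤ (n:ℝ) := by exact_mod_cast hn
  have := Real.one_le_rpow hn' (by positivity : (0:ℝ) ≤ 1 + 1/(m+1))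
  linarith

lemma volume_ESet_le (m n : ℕ) :
    volume (ESet m n) ≤ ENNReal.ofReal (2 / (n:ℝ) ^ ((1:ℝ) + 1/(m+1))) := by
  rcases Nat.eq_zero_or_pos n with rfl | hn
  · have : ESet m 0 = ∅ := by ext x; simp [ESet]
    rw [this]
    simp
  · have hk1 : 1 ≤ kceil m n := kceil_pos m hn
    have h1 : volume (ESet m n) ≤ ENNReal.ofReal (2 / (kceil m n : ℝ)) := by
      refine le_trans (measure_mono ?_) (volume_partQuot_ge (n - 1) (kceil m n) hk1)
      intro x hx
      have : n - 1 + 1 = n := by omega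
      rw [this]
      exact ⟨hx.1, hx.2.2⟩
    refine le_trans h1 (ENNReal.ofReal_le_ofReal ?_)
    have hrpos : (0:ℝ) < (n:ℝ) ^ ((1:ℝ) + 1/(m+1)) := by
      have : (0:ℝ) < (n:ℝ) := by exact_mod_cast hn
      positivity
    apply div_le_div_of_nonneg_left (by norm_num) hrpos
    exact Nat.le_ceil _

lemma tsum_volume_ESet_ne_top (m : ℕ) : (∑' n, volume (ESet m n)) ≠ ⊤ := by
  set p : ℝ := (1:ℝ) + 1/(m+1) with hp
  have hp1 : 1 < p := by
    rw [hp]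
    have : (0:ℝ) < 1/((m:ℝ)+1) := by positivity
    linarith
  have hsum : Summable (fun n : ℕ => 2 * (1 / (n:ℝ) ^ p)) :=
    (Real.summable_one_div_nat_rpow.2 hp1).mul_left 2
  have hsum' : Summable (fun n : ℕ => 2 / (n:ℝ) ^ p) := by
    refine hsum.congr fun n => by ring
  have hb : (∑' n, volume (ESet m n)) ≤ ∑' n : ℕ, ENNReal.ofReal (2 / (n:ℝ) ^ p) :=
    ENNReal.tsum_le_tsum fun n => volume_ESet_le m n
  refine ne_top_of_le_ne_top ?_ hb
  rw [← ENNReal.ofReal_tsum_of_nonneg (fun n => by positivity) hsum']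
  exact ENNReal.ofReal_ne_top

lemma volume_limsup_ESet (m : ℕ) : volume (Filter.limsup (ESet m) atTop) = 0 :=
  measure_limsup_atTop_eq_zero (tsum_volume_ESet_ne_top m)

/-- The full bad set. -/
noncomputable def fullBad : Set ℝ :=
  {x : ℝ | Irrational x}ᶜ ∪ (⋃ N, badTail (N + 2)) ∪ ⋃ m, Filter.limsup (ESet m) atTop

lemma volume_fullBad : volume fullBad = 0 := by
  rw [fullBad]
  refine measure_union_null (measure_union_null volume_irr_compl ?_) ?_
  · exact measure_iUnion_null fun N => volume_badTail (N + 2) (by omega)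
  · exact measure_iUnion_null fun m => volume_limsup_ESet m

/-! ### Final assembly -/

lemma log_nat_nonneg (n : ℕ) : 0 ≤ Real.log n := by
  rcases Nat.eq_zero_or_pos n with rfl | hn
  · simp
  · exact Real.log_nonneg (by exact_mod_cast hn)

lemma partQuot_pos' {x : ℝ} (hx : Irr01 x) {n : ℕ} (hn : 1 ≤ n) : 1 ≤ partQuot x n := by
  obtain ⟨k, rfl⟩ : ∃ k, n = k + 1 := ⟨n - 1, by omega⟩
  rw [partQuot_eq_iterate]
  exact partQuot_one_pos (hx.iterate k)


/-- For almost every `x = [a₁, a₂, …] ∈ (0,1)`, `limsup_{n→∞} (log aₙ)/(log n) = 1`. -/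
theorem limsup_log_partial_quotients :
    ∀ᵐ x ∂(volume.restrict (Set.Ioo (0 : ℝ) 1)),
      Filter.limsup (fun n : ℕ => Real.log (partQuot x n) / Real.log n) atTop = 1 := by
  have hae1 : ∀ᵐ x ∂(volume.restrict (Set.Ioo (0 : ℝ) 1)), x ∈ Set.Ioo (0:ℝ) 1 :=
    ae_restrict_mem measurableSet_Ioo
  have hae2 : ∀ᵐ x ∂(volume.restrict (Set.Ioo (0 : ℝ) 1)), x ∉ fullBad := by
    have hz : (volume.restrict (Set.Ioo (0 : ℝ) 1)) fullBad = 0 :=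
      le_antisymm (le_trans (Measure.restrict_le_self _) volume_fullBad.le) zero_le
    rw [ae_iff]
    simpa using hz
  filter_upwards [hae1, hae2] with x hx1 hx2
  set u : ℕ → ℝ := fun n => Real.log (partQuot x n) / Real.log n with hu
  have hirr : Irrational x := by
    by_contra hcon
    exact hx2 (Or.inl (Or.inl hcon))
  have hx01 : Irr01 x := ⟨hx1, hirr⟩
  have h0 : ∀ n, 0 ≤ u n := fun n => div_nonneg (log_nat_nonneg _) (log_nat_nonneg n)
  -- frequently aₙ ≥ n
  have hfreq : ∀ N, ∃ n, N + 2 ≤ n ∧ n ≤ partQuot x n := by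
    intro N
    have hnot : x ∉ badTail (N + 2) := fun h =>
      hx2 (Or.inl (Or.inr (Set.mem_iUnion.2 ⟨N, h⟩)))
    simp only [badTail, Set.mem_setOf_eq, not_and, not_forall, not_lt] at hnot
    obtain ⟨n, hn1, hn2⟩ := hnot hx01
    exact ⟨n, hn1, hn2⟩
  -- eventual upper bounds
  have hev : ∀ m : ℕ, ∀ᶠ n in atTop, u n ≤ 1 + 1/((m:ℝ)+1) := by
    intro m
    have hnot : x ∉ Filter.limsup (ESet m) atTop := fun h =>
      hx2 (Or.inr (Set.mem_iUnion.2 ⟨m, h⟩))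
    rw [Filter.mem_limsup_iff_frequently_mem, Filter.not_frequently] at hnot
    filter_upwards [hnot, eventually_ge_atTop 2] with n hn h2n
    have hlt : partQuot x n < kceil m n := by
      by_contra hcon
      push_neg at hcon
      exact hn ⟨hx01, by omega, hcon⟩
    rw [kceil, Nat.lt_ceil] at hlt
    have hlogn : 0 < Real.log n := Real.log_pos (by exact_mod_cast h2n)
    have ha1 : (1:ℝ) ≤ (partQuot x n : ℝ) := by
      exact_mod_cast partQuot_pos' hx01 (by omega)
    have hloga : Real.log (partQuot x n) ≤ ((1:ℝ) + 1/((m:ℝ)+1)) * Real.log n := by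
      calc Real.log (partQuot x n) ≤ Real.log ((n:ℝ) ^ ((1:ℝ) + 1/((m:ℝ)+1))) := by
            apply Real.log_le_log (by linarith)
            push_cast at hlt ⊢
            linarith
        _ = ((1:ℝ) + 1/((m:ℝ)+1)) * Real.log n := by
            rw [Real.log_rpow (by positivity : (0:ℝ) < (n:ℝ))]
    rw [hu]
    simp only []
    rw [div_le_iff₀ hlogn]
    exact hloga
  have hbdd : IsBoundedUnder (· ≤ ·) atTop u := by
    refine ⟨2, ?_⟩
    rw [eventually_map]
    filter_upwards [hev 0] with n hn
    norm_num at hn ⊢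
    linarith
  have hcob : IsCoboundedUnder (· ≤ ·) atTop u :=
    isCoboundedUnder_le_of_le atTop (x := 0) h0
  refine le_antisymm ?_ ?_
  · by_contra hlt
    push_neg at hlt
    obtain ⟨m, hm⟩ := exists_nat_one_div_lt (by linarith : (0:ℝ) < limsup u atTop - 1)
    have hle : limsup u atTop ≤ 1 + 1/((m:ℝ)+1) := limsup_le_of_le hcob (hev m)
    push_cast at hm
    linarith
  · refine le_limsup_of_frequently_le ?_ hbdd
    rw [frequently_atTop]
    intro N
    obtain ⟨n, hn1, hn2⟩ := hfreq N
    refine ⟨n, by omega, ?_⟩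
    have hlogn : 0 < Real.log n := Real.log_pos (by
      have : 2 ≤ n := by omega
      exact_mod_cast this)
    rw [hu]
    simp only []
    rw [le_div_iff₀ hlogn, one_mul]
    apply Real.log_le_log (by exact_mod_cast (show 0 < n by omega))
    exact_mod_cast hn2
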